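/- The set 𝒞 = {(W, μ) : W symmetric positive semidefinite, Θ₁(W, μ) ⪯ 0, μ > 0} is a convex subset of the real vector space of symmetric p×p matrices times ℝ: if (W¹, μ¹) ∈ 𝒞, (W², μ²) ∈ 𝒞 and α ∈ [0,1], then (αW¹ + (1−α)W², αμ¹ + (1−α)μ²) ∈ 𝒞. -/

import Mathlib

open Matrix

/-- The extended matrix `F = [[A, −B₂],[0, 0]]`. -/
noncomputable def Fmat {n m : ℕ} (A : Matrix (Fin n) (Fin n) ℝ) (B₂ : Matrix (Fin n) (Fin m) ℝ) :
    Matrix (Fin n ⊕ Fin m) (Fin n ⊕ Fin m) ℝ :=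
  Matrix.fromBlocks A (-B₂) 0 0

/-- The extended matrix `Q = [[B₁B₁ᵀ, 0],[0, 0]]`. -/
noncomputable def Qmat {n m l : ℕ} (B₁ : Matrix (Fin n) (Fin l) ℝ) :
    Matrix (Fin n ⊕ Fin m) (Fin n ⊕ Fin m) ℝ :=
  Matrix.fromBlocks (B₁ * B₁ᵀ) 0 0 0

/-- The extended matrix `R = [[CᵀC, 0],[0, DᵀD]]`. -/
noncomputable def Rmat {n m q : ℕ} (C : Matrix (Fin q) (Fin n) ℝ) (D : Matrix (Fin q) (Fin m) ℝ) :
    Matrix (Fin n ⊕ Fin m) (Fin n ⊕ Fin m) ℝ :=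
  Matrix.fromBlocks (Cᵀ * C) 0 0 (Dᵀ * D)

/-- `Θ(W, μ) = FW + WFᵀ + WRW + μQ`. -/
noncomputable def Theta {n m l q : ℕ} (A : Matrix (Fin n) (Fin n) ℝ) (B₂ : Matrix (Fin n) (Fin m) ℝ)
    (B₁ : Matrix (Fin n) (Fin l) ℝ) (C : Matrix (Fin q) (Fin n) ℝ) (D : Matrix (Fin q) (Fin m) ℝ)
    (W : Matrix (Fin n ⊕ Fin m) (Fin n ⊕ Fin m) ℝ) (μ : ℝ) :
    Matrix (Fin n ⊕ Fin m) (Fin n ⊕ Fin m) ℝ :=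
  Fmat A B₂ * W + W * (Fmat A B₂)ᵀ + W * Rmat C D * W + μ • Qmat (m := m) B₁

/-- `Θ₁(W, μ)` is the top-left `n × n` block of `Θ(W, μ)`. -/
noncomputable def Theta1 {n m l q : ℕ} (A : Matrix (Fin n) (Fin n) ℝ) (B₂ : Matrix (Fin n) (Fin m) ℝ)
    (B₁ : Matrix (Fin n) (Fin l) ℝ) (C : Matrix (Fin q) (Fin n) ℝ) (D : Matrix (Fin q) (Fin m) ℝ)
    (W : Matrix (Fin n ⊕ Fin m) (Fin n ⊕ Fin m) ℝ) (μ : ℝ) : Matrix (Fin n) (Fin n) ℝ :=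
  (Theta A B₂ B₁ C D W μ).toBlocks₁₁


section Aux
open Matrix

lemma psd_add' {p : Type*} [Fintype p] {X Y : Matrix p p ℝ} (hX : X.PosSemidef)
    (hY : Y.PosSemidef) : (X + Y).PosSemidef := by
  exact hX.add hY

lemma psd_smul' {p : Type*} [Fintype p] {X : Matrix p p ℝ} (hX : X.PosSemidef) {c : ℝ}
    (hc : 0 ≤ c) : (c • X).PosSemidef := by
  exact hX.smul hc

end Aux

/-- The set `𝒞 = {(W, μ) : W symmetric PSD, Θ₁(W, μ) ⪯ 0, μ > 0}` is convex. -/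
theorem stmt_1 (n m l q : ℕ) (A : Matrix (Fin n) (Fin n) ℝ) (B₂ : Matrix (Fin n) (Fin m) ℝ)
    (B₁ : Matrix (Fin n) (Fin l) ℝ) (C : Matrix (Fin q) (Fin n) ℝ) (D : Matrix (Fin q) (Fin m) ℝ)
    (W₁ W₂ : Matrix (Fin n ⊕ Fin m) (Fin n ⊕ Fin m) ℝ) (μ₁ μ₂ : ℝ)
    (hW₁s : W₁.IsSymm) (hW₁ : W₁.PosSemidef) (hΘ₁ : (-(Theta1 A B₂ B₁ C D W₁ μ₁)).PosSemidef)
    (hμ₁ : 0 < μ₁)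
    (hW₂s : W₂.IsSymm) (hW₂ : W₂.PosSemidef) (hΘ₂ : (-(Theta1 A B₂ B₁ C D W₂ μ₂)).PosSemidef)
    (hμ₂ : 0 < μ₂)
    (α : ℝ) (hα : α ∈ Set.Icc (0 : ℝ) 1) :
    (α • W₁ + (1 - α) • W₂).IsSymm ∧ (α • W₁ + (1 - α) • W₂).PosSemidef ∧
      (-(Theta1 A B₂ B₁ C D (α • W₁ + (1 - α) • W₂) (α * μ₁ + (1 - α) * μ₂))).PosSemidef ∧
      0 < α * μ₁ + (1 - α) * μ₂ := by
  obtain ⟨hα0, hα1⟩ := hα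
  have hβ0 : (0:ℝ) ≤ 1 - α := by linarith
  have hαβ : (0:ℝ) ≤ α * (1 - α) := mul_nonneg hα0 hβ0
  set M : Matrix (Fin n ⊕ Fin m) (Fin n ⊕ Fin m) ℝ := W₁ - W₂ with hMdef
  -- R is PSD
  have hRfac : Rmat C D = (Matrix.fromBlocks C 0 0 D)ᴴ * (Matrix.fromBlocks C 0 0 D) := by
    have : (Matrix.fromBlocks C 0 0 D)ᴴ = Matrix.fromBlocks Cᵀ 0 0 Dᵀ := by
      rw [Matrix.fromBlocks_conjTranspose]
      congr 1
    rw [this, Matrix.fromBlocks_multiply]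
    simp [Rmat]
  have hR : (Rmat (m := m) C D).PosSemidef := by
    rw [hRfac]; exact Matrix.posSemidef_conjTranspose_mul_self _
  have hMherm : Mᴴ = M := (hW₁.1.sub hW₂.1).eq
  have hMRM : (M * Rmat C D * M).PosSemidef := by
    have := hR.mul_mul_conjTranspose_same M
    rwa [hMherm] at this
  -- key algebraic identity
  have key : Theta A B₂ B₁ C D (α • W₁ + (1 - α) • W₂) (α * μ₁ + (1 - α) * μ₂)
      = α • Theta A B₂ B₁ C D W₁ μ₁ + (1 - α) • Theta A B₂ B₁ C D W₂ μ₂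
        - (α * (1 - α)) • (M * Rmat C D * M) := by
    unfold Theta
    rw [hMdef]
    simp only [mul_add, add_mul, sub_mul, mul_sub, smul_mul_assoc, mul_smul_comm,
      smul_add, smul_sub, smul_smul, add_smul, sub_smul, one_smul]
    module
  have key1 : Theta1 A B₂ B₁ C D (α • W₁ + (1 - α) • W₂) (α * μ₁ + (1 - α) * μ₂)
      = α • Theta1 A B₂ B₁ C D W₁ μ₁ + (1 - α) • Theta1 A B₂ B₁ C D W₂ μ₂
        - (α * (1 - α)) • ((M * Rmat C D * M).toBlocks₁₁) := by
    unfold Theta1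
    rw [key]
    ext i j
    simp [Matrix.toBlocks₁₁]
  refine ⟨?_, ?_, ?_, ?_⟩
  · unfold Matrix.IsSymm
    rw [Matrix.transpose_add, Matrix.transpose_smul, Matrix.transpose_smul, hW₁s.eq, hW₂s.eq]
  · exact psd_add' (psd_smul' hW₁ hα0) (psd_smul' hW₂ hβ0)
  · have heq : -(Theta1 A B₂ B₁ C D (α • W₁ + (1 - α) • W₂) (α * μ₁ + (1 - α) * μ₂))
        = α • (-(Theta1 A B₂ B₁ C D W₁ μ₁)) + ((1 - α) • (-(Theta1 A B₂ B₁ C D W₂ μ₂))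
          + (α * (1 - α)) • ((M * Rmat C D * M).toBlocks₁₁)) := by
      rw [key1]; module
    rw [heq]
    have hblk : ((M * Rmat C D * M).toBlocks₁₁).PosSemidef := by
      have : (M * Rmat C D * M).toBlocks₁₁
          = (M * Rmat C D * M).submatrix Sum.inl Sum.inl := rfl
      rw [this]
      exact hMRM.submatrix _
    exact psd_add' (psd_smul' hΘ₁ hα0) (psd_add' (psd_smul' hΘ₂ hβ0) (psd_smul' hblk hαβ))
  · rcases eq_or_lt_of_le hα1 with h | h
    · rw [h]; nlinarith
    · have h1 : 0 < (1 - α) * μ₂ := mul_pos (by linarith) hμ₂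
      have h2 : 0 ≤ α * μ₁ := mul_nonneg hα0 hμ₁.le
      linarith
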